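/- Let n ≥ 1 and let x, y ∈ Bⁿ with x ≠ 0 and |y| ≤ |x|. Then log(1 + |x−y|/(1−|x|)) ≤ |x−y| / ((1−|x|)·|y − x/|x||). (The right-hand side is the quantity ĉ_{Bⁿ}(x,y), since x/|x| is the unique point of ∂Bⁿ ∩ Sⁿ⁻¹(x, d(x,∂Bⁿ)).) -/

import Mathlib

/-- Key analytic inequality: `√v · log v ≤ v − 1` for `v ≥ 1`. -/
lemma sqrt_mul_log_le (v : ℝ) (hv : 1 ≤ v) : Real.sqrt v * Real.log v ≤ v - 1 := by
  set w := Real.sqrt v with hw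
  have hw1 : 1 ≤ w := by
    rw [hw, show (1:ℝ) = Real.sqrt 1 by simp]
    exact Real.sqrt_le_sqrt hv
  have hwpos : 0 < w := lt_of_lt_of_le one_pos hw1
  have hv' : v = w ^ 2 := (Real.sq_sqrt (by linarith : (0:ℝ) ≤ v)).symm
  rw [hv']
  have hlog : Real.log (w ^ 2) = 2 * Real.log w := by
    rw [Real.log_pow]; push_cast; ring
  rw [hlog]
  -- need: 2 w log w ≤ w² − 1.  Let s = log w ≥ 0, w = exp s; use s ≤ sinh s.
  set s := Real.log w with hs
  have hs0 : 0 ≤ s := Real.log_nonneg hw1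
  have hws : w = Real.exp s := (Real.exp_log hwpos).symm
  rw [hws]
  have hsinh : s ≤ Real.sinh s := by
    rcases eq_or_lt_of_le hs0 with h | h
    · simp [← h]
    · exact le_of_lt (Real.self_lt_sinh_iff.mpr h)
  have hsinh' : Real.sinh s = (Real.exp s - Real.exp (-s)) / 2 := Real.sinh_eq s
  have hinv : Real.exp (-s) = (Real.exp s)⁻¹ := Real.exp_neg s
  have hep : 0 < Real.exp s := Real.exp_pos s
  rw [hsinh', hinv] at hsinh
  have h2 : 2 * s * Real.exp s ≤ (Real.exp s - (Real.exp s)⁻¹) * Real.exp s := by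
    have := mul_le_mul_of_nonneg_right hsinh (le_of_lt hep)
    nlinarith
  have hii : (Real.exp s)⁻¹ * Real.exp s = 1 := inv_mul_cancel₀ (ne_of_gt hep)
  nlinarith [sq_nonneg (Real.exp s)]

/-- Key analytic inequality in the form needed: for `a > 0`, `t ≥ 0`, `0 < d ≤ a + t`
and `a * (a + t) ≤ 1`, we have `log (1 + t/a) ≤ t / (a * d)`. -/
lemma key_ineq (a t d : ℝ) (ha : 0 < a) (ht : 0 ≤ t) (hd : 0 < d) (hdat : d ≤ a + t)
    (h1 : a * (a + t) ≤ 1) : Real.log (1 + t / a) ≤ t / (a * d) := by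
  set v := 1 + t / a with hv
  have hv1 : 1 ≤ v := by
    rw [hv]; nlinarith [div_nonneg ht ha.le]
  have hav : a * v = a + t := by
    rw [hv]; field_simp
  have ha2v : a ^ 2 * v ≤ 1 := by nlinarith
  have hvpos : 0 < v := lt_of_lt_of_le one_pos hv1
  set sv := Real.sqrt v with hsvdef
  have hsvpos : 0 < sv := Real.sqrt_pos.mpr hvpos
  have hsv2 : sv ^ 2 = v := Real.sq_sqrt hvpos.le
  have hasv : a * sv ≤ 1 := by
    nlinarith [sq_nonneg (a * sv - 1), sq_nonneg (a * sv + 1)]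
  have hlog0 : 0 ≤ Real.log v := Real.log_nonneg hv1
  have hkey : sv * Real.log v ≤ v - 1 := sqrt_mul_log_le v hv1
  rw [le_div_iff₀ (by positivity : (0:ℝ) < a * d)]
  have ht' : a * (v - 1) = t := by nlinarith
  calc Real.log v * (a * d) ≤ Real.log v * (a * (a * v)) := by
        have hdv : d ≤ a * v := by linarith
        nlinarith [mul_le_mul_of_nonneg_left hdv (mul_nonneg ha.le hlog0)]
    _ = (a * sv) * (a * (sv * Real.log v)) := by rw [← hsv2]; ring
    _ ≤ 1 * (a * (sv * Real.log v)) := by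
        have h0 : 0 ≤ a * (sv * Real.log v) := by positivity
        nlinarith [mul_le_mul_of_nonneg_right hasv h0]
    _ = a * (sv * Real.log v) := by ring
    _ ≤ a * (v - 1) := mul_le_mul_of_nonneg_left hkey ha.le
    _ = t := ht'
/-- for `x, y ∈ Bⁿ` with `x ≠ 0` and `|y| ≤ |x|`,
`log(1 + |x−y|/(1−|x|)) ≤ |x−y| / ((1−|x|)·|y − x/|x||)` (the right-hand side being
`ĉ_{Bⁿ}(x,y)`). -/
theorem jMet_le_cHat (n : ℕ) (hn : 1 ≤ n) (x y : EuclideanSpace ℝ (Fin n))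
    (hx : x ∈ Metric.ball (0 : EuclideanSpace ℝ (Fin n)) 1)
    (hy : y ∈ Metric.ball (0 : EuclideanSpace ℝ (Fin n)) 1)
    (hx0 : x ≠ 0) (hyx : ‖y‖ ≤ ‖x‖) :
    Real.log (1 + ‖x - y‖ / (1 - ‖x‖)) ≤
      ‖x - y‖ / ((1 - ‖x‖) * ‖y - ‖x‖⁻¹ • x‖) := by
  have hr0 : 0 < ‖x‖ := norm_pos_iff.mpr hx0
  have hr1 : ‖x‖ < 1 := by simpa using mem_ball_zero_iff.mp hx
  have hpnorm : ‖(‖x‖⁻¹ • x : EuclideanSpace ℝ (Fin n))‖ = 1 := by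
    rw [norm_smul, norm_inv, norm_norm, inv_mul_cancel₀ (ne_of_gt hr0)]
  have hxp : ‖x - ‖x‖⁻¹ • x‖ = 1 - ‖x‖ := by
    have : x - ‖x‖⁻¹ • x = (1 - ‖x‖⁻¹) • x := by
      rw [sub_smul, one_smul]
    rw [this, norm_smul, Real.norm_eq_abs]
    have h1r : (1:ℝ) < ‖x‖⁻¹ := (one_lt_inv₀ hr0).mpr hr1
    rw [abs_of_nonpos (by linarith)]
    field_simp
    ring
  have hdle : ‖y - ‖x‖⁻¹ • x‖ ≤ ‖x - y‖ + (1 - ‖x‖) := by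
    calc ‖y - ‖x‖⁻¹ • x‖ = ‖(y - x) + (x - ‖x‖⁻¹ • x)‖ := by rw [sub_add_sub_cancel]
      _ ≤ ‖y - x‖ + ‖x - ‖x‖⁻¹ • x‖ := norm_add_le _ _
      _ = ‖x - y‖ + (1 - ‖x‖) := by rw [norm_sub_rev, hxp]
  have hdpos : 0 < ‖y - ‖x‖⁻¹ • x‖ := by
    rw [norm_pos_iff, sub_ne_zero]
    intro h
    rw [← hpnorm, ← h] at hr1
    linarith [hyx, hr1]
  have ht2r : ‖x - y‖ ≤ 2 * ‖x‖ := by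
    calc ‖x - y‖ ≤ ‖x‖ + ‖y‖ := norm_sub_le x y
      _ ≤ 2 * ‖x‖ := by linarith
  have h1 : (1 - ‖x‖) * ((1 - ‖x‖) + ‖x - y‖) ≤ 1 := by nlinarith
  have := key_ineq (1 - ‖x‖) ‖x - y‖ ‖y - ‖x‖⁻¹ • x‖ (by linarith) (norm_nonneg _)
    hdpos (by linarith) h1
  exact this
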